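/- Let (G, τ) be a locally quasi-convex Hausdorff group topology of finite exponent that is not precompact. Then the dual group (G, τ)^ of continuous characters has cardinality at least the continuum 𝔠. -/

import Mathlib

open scoped Topology
open Filter

noncomputable section

abbrev Circle1 : Type := AddCircle (1 : ℝ)

def Tpos : Set Circle1 := (fun r : ℝ => (r : Circle1)) '' Set.Icc (-(1/4) : ℝ) (1/4)

variable {G : Type*}

def IsChar [AddCommGroup G] (τ : TopologicalSpace G) (φ : G →+ Circle1) : Prop :=
  @Continuous G Circle1 τ _ φ

def QuasiConvex [AddCommGroup G] (τ : TopologicalSpace G) (M : Set G) : Prop :=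
  ∀ x ∉ M, ∃ φ : G →+ Circle1, IsChar τ φ ∧ (∀ y ∈ M, φ y ∈ Tpos) ∧ φ x ∉ Tpos

def LocallyQuasiConvex [AddCommGroup G] (τ : TopologicalSpace G) : Prop :=
  ∀ U ∈ @nhds G τ 0, ∃ M ∈ @nhds G τ 0, QuasiConvex τ M ∧ M ⊆ U

def Compatible [AddCommGroup G] (τ τ' : TopologicalSpace G) : Prop :=
  ∀ φ : G →+ Circle1, IsChar τ φ ↔ IsChar τ' φ

def IsMackey [AddCommGroup G] (τ : TopologicalSpace G) : Prop :=
  @IsTopologicalAddGroup G τ _ ∧ LocallyQuasiConvex τ ∧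
    ∀ τ' : TopologicalSpace G, @IsTopologicalAddGroup G τ' _ →
      LocallyQuasiConvex τ' → Compatible τ τ' → τ ≤ τ'

def BoundedGroup (G : Type*) [AddCommGroup G] : Prop :=
  ∃ m : ℕ, 0 < m ∧ ∀ x : G, m • x = 0

def Precompact [AddCommGroup G] (τ : TopologicalSpace G) : Prop :=
  ∀ U ∈ @nhds G τ 0, ∃ F : Finset G, ∀ x : G, ∃ f ∈ F, x - f ∈ U

def LinearTop [AddCommGroup G] (τ : TopologicalSpace G) : Prop :=
  ∀ U ∈ @nhds G τ 0, ∃ H : AddSubgroup G, @IsOpen G τ (H : Set G) ∧ (H : Set G) ⊆ U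

def DuallyClosed [AddCommGroup G] (τ : TopologicalSpace G) (H : AddSubgroup G) : Prop :=
  ∀ x : G, x ∉ H → ∃ φ : G →+ Circle1, IsChar τ φ ∧ (∀ h ∈ H, φ h = 0) ∧ φ x ≠ 0

def WeakTop [AddCommGroup G] (τ : TopologicalSpace G) : TopologicalSpace G :=
  ⨅ φ : {φ : G →+ Circle1 // IsChar τ φ}, TopologicalSpace.induced φ.1 inferInstance


section AuxProofs

lemma tpos_zero : (0 : Circle1) ∈ Tpos :=
  ⟨0, by norm_num, by norm_num⟩

lemma tpos_neg {c : Circle1} (h : c ∈ Tpos) : -c ∈ Tpos := by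
  obtain ⟨r, hr, hre⟩ := h
  have hre' : (r : Circle1) = c := hre
  exact ⟨-r, ⟨by linarith [hr.2], by linarith [hr.1]⟩, by
    show ((-r : ℝ) : Circle1) = -c
    rw [AddCircle.coe_neg, hre']⟩

lemma not_tpos_of_mem {y : ℝ} (hy1 : 1/4 < y) (hy2 : y ≤ 1/2) : ((y : ℝ) : Circle1) ∉ Tpos := by
  rintro ⟨r, hr, hre⟩
  have hre' : (r : Circle1) = (y : Circle1) := hre
  have h0 : ((y - r : ℝ) : Circle1) = 0 := by
    rw [AddCircle.coe_sub, hre', sub_self]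
  obtain ⟨n, hn⟩ := (AddCircle.coe_eq_zero_iff (1:ℝ)).mp h0
  rw [zsmul_eq_mul, mul_one] at hn
  have h1 : (0:ℝ) < n := by rw [hn]; linarith [hr.2]
  have h2 : (n:ℝ) < 1 := by rw [hn]; linarith [hr.1]
  have h3 : (0:ℤ) < n := by exact_mod_cast h1
  have h4 : (1:ℝ) ≤ n := by exact_mod_cast h3
  linarith

lemma circle_eq_zero_of_forall_nsmul_mem {c : Circle1} (h : ∀ k : ℕ, k • c ∈ Tpos) : c = 0 := by
  by_contra hc
  obtain ⟨x, hx, hxe⟩ := h 1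
  have hxe' : (x : Circle1) = c := by simpa using hxe
  have hx0 : x ≠ 0 := by
    rintro rfl; rw [← hxe'] at hc; simp at hc
  have key : ∀ x : ℝ, 0 < x → x ≤ 1/4 → ∃ k : ℕ, ((((k:ℝ) * x : ℝ)) : Circle1) ∉ Tpos := by
    intro x hx hx4
    have hxne : x ≠ 0 := ne_of_gt hx
    set t : ℝ := (1/4) / x with ht
    refine ⟨(⌊t⌋).toNat + 1, ?_⟩
    set k : ℕ := (⌊t⌋).toNat + 1 with hkdef
    have ht0 : (0:ℝ) ≤ t := by positivity
    have htx : t * x = 1/4 := by rw [ht]; field_simp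
    have hk1 : (k : ℝ) = (⌊t⌋ : ℝ) + 1 := by
      have h5 : ((⌊t⌋).toNat : ℤ) = ⌊t⌋ := Int.toNat_of_nonneg (Int.floor_nonneg.mpr ht0)
      have h6 : ((⌊t⌋.toNat : ℝ)) = (⌊t⌋ : ℝ) := by exact_mod_cast congrArg (Int.cast : ℤ → ℝ) h5
      rw [hkdef]
      push_cast
      rw [h6]
    have hgt : (1/4 : ℝ) < k * x := by
      have h6 : t < (k:ℝ) := by rw [hk1]; exact Int.lt_floor_add_one t
      nlinarith
    have hle : (k:ℝ) * x ≤ 1/2 := by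
      have h7 : ((⌊t⌋:ℝ)) * x ≤ t * x := by nlinarith [Int.floor_le t]
      rw [hk1]; nlinarith
    exact not_tpos_of_mem hgt hle
  have hcoe : ∀ (k : ℕ) (y : ℝ), (((k:ℝ) * y : ℝ) : Circle1) = k • ((y : ℝ) : Circle1) := by
    intro k y
    rw [← nsmul_eq_mul]
    exact AddCircle.coe_nsmul _
  rcases lt_or_gt_of_ne hx0 with hneg | hpos
  · obtain ⟨k, hk⟩ := key (-x) (by linarith) (by linarith [hx.1])
    apply hk
    rw [hcoe k (-x)]
    have : ((-x : ℝ) : Circle1) = -c := by rw [AddCircle.coe_neg, hxe']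
    rw [this, smul_neg]
    exact tpos_neg (h k)
  · obtain ⟨k, hk⟩ := key x hpos hx.2
    apply hk
    rw [hcoe k x, hxe']
    exact h k

/-- The embedding of the rational circle into the real circle. -/
noncomputable def ratToReal : AddCircle (1 : ℚ) →+ Circle1 :=
  QuotientAddGroup.lift (AddSubgroup.zmultiples (1 : ℚ))
    ((QuotientAddGroup.mk' (AddSubgroup.zmultiples (1 : ℝ))).comp
      (Rat.castHom ℝ).toAddMonoidHom)
    (by
      intro q hq
      obtain ⟨n, hn⟩ := hq
      simp only [smul_eq_mul, mul_one] at hn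
      rw [AddMonoidHom.mem_ker]
      simp only [AddMonoidHom.comp_apply, RingHom.toAddMonoidHom_eq_coe,
        AddMonoidHom.coe_coe, Rat.coe_castHom, QuotientAddGroup.mk'_apply]
      rw [QuotientAddGroup.eq_zero_iff]
      refine ⟨n, ?_⟩
      have : (q : ℝ) = ((n • (1:ℚ) : ℚ) : ℝ) := by rw [hn]
      rw [this]
      push_cast [zsmul_eq_mul]
      ring)

lemma ratToReal_eq_zero {q : AddCircle (1:ℚ)} (h : ratToReal q = 0) : q = 0 := by
  induction q using QuotientAddGroup.induction_on with
  | H r =>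
    have : ((r : ℝ) : Circle1) = 0 := h
    rw [AddCircle.coe_eq_zero_iff] at this ⊢
    obtain ⟨n, hn⟩ := this
    refine ⟨n, ?_⟩
    have : ((n • (1:ℚ) : ℚ) : ℝ) = (r : ℝ) := by rw [← hn]; push_cast [zsmul_eq_mul]; ring
    exact_mod_cast this

/-- Separation: for a nonzero element of an abelian group there is a character into the
real circle which does not vanish on it. -/
lemma exists_char_ne_zero {B : Type*} [AddCommGroup B] {b : B} (hb : b ≠ 0) :
    ∃ φ : B →+ Circle1, φ b ≠ 0 := by
  obtain ⟨c, hc⟩ := CharacterModule.exists_character_apply_ne_zero_of_ne_zero hb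
  refine ⟨AddMonoidHom.mk' (fun x => ratToReal (c x)) ?_, ?_⟩
  · intro x y; show ratToReal (c (x + y)) = ratToReal (c x) + ratToReal (c y)
    rw [map_add, map_add]
  · intro h
    exact hc (ratToReal_eq_zero h)

lemma exists_not_mem_closure {A : Type*} [AddCommGroup A] [Infinite A] {m : ℕ} (hm : 0 < m)
    (hA : ∀ a : A, m • a = 0) (s : Finset A) :
    ∃ x : A, x ∉ AddSubgroup.closure (s : Set A) := by
  obtain ⟨k, rfl⟩ : ∃ k, m = k + 1 := ⟨m - 1, by omega⟩
  letI : Module (ZMod (k + 1)) A := AddCommGroup.zmodModule hA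
  by_contra hcon
  push_neg at hcon
  have hle : AddSubgroup.closure (s : Set A) ≤
      (Submodule.span (ZMod (k + 1)) (s : Set A)).toAddSubgroup :=
    (AddSubgroup.closure_le _).mpr Submodule.subset_span
  haveI := Module.Finite.span_of_finite (ZMod (k + 1)) s.finite_toSet (M := A)
  haveI : Finite ↥(Submodule.span (ZMod (k + 1)) ((s : Finset A) : Set A)) :=
    Module.finite_of_finite (ZMod (k + 1))
  have hfin : ((Submodule.span (ZMod (k + 1)) (s : Set A) : Submodule (ZMod (k + 1)) A) : Set A).Finite :=
    Set.toFinite _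
  have huniv : (Set.univ : Set A).Finite := by
    apply hfin.subset
    intro x _
    exact hle (hcon x)
  exact Set.infinite_univ huniv

universe uA in
lemma card_continuum_le_hom {A : Type uA} [AddCommGroup A] [Infinite A] {m : ℕ} (hm : 0 < m)
    (hA : ∀ a : A, m • a = 0) : Cardinal.continuum ≤ Cardinal.mk (A →+ Circle1) := by
  haveI := Classical.decEq A
  -- a finite subset never generates everything
  have key : ∀ s : Finset A, ∃ x : A, x ∉ AddSubgroup.closure (s : Set A) :=
    fun s => exists_not_mem_closure hm hA s
  -- the tower
  let F : ℕ → Finset A := fun n => Nat.rec (motive := fun _ => Finset A) ∅ (fun _ Fn => insert (key Fn).choose Fn) n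
  let a : ℕ → A := fun n => (key (F n)).choose
  have hFsucc : ∀ n, F (n + 1) = insert (a n) (F n) := fun n => rfl
  let S : ℕ → AddSubgroup A := fun n => AddSubgroup.closure (↑(F n) : Set A)
  have ha : ∀ n, a n ∉ S n := fun n => (key (F n)).choose_spec
  have hFmono : Monotone F := monotone_nat_of_le_succ (fun n => by
    rw [hFsucc]; exact Finset.subset_insert _ _)
  have hSmono : Monotone S := fun i j hij =>
    AddSubgroup.closure_mono (Finset.coe_subset.mpr (hFmono hij))
  have haS : ∀ n, a n ∈ S (n + 1) := fun n =>
    AddSubgroup.subset_closure (by rw [hFsucc]; exact Finset.mem_insert_self _ _)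
  -- relative characters
  have hphi : ∀ n, ∃ φ : A →+ Circle1, (∀ x ∈ S n, φ x = 0) ∧ φ (a n) ≠ 0 := by
    intro n
    have hb : ((a n : A) : A ⧸ S n) ≠ 0 := by
      rw [Ne, QuotientAddGroup.eq_zero_iff]; exact ha n
    obtain ⟨ψ, hψ⟩ := exists_char_ne_zero hb
    refine ⟨ψ.comp (QuotientAddGroup.mk' (S n)), fun x hx => ?_, by simpa using hψ⟩
    have hx0 : ((x : A) : A ⧸ S n) = 0 := (QuotientAddGroup.eq_zero_iff x).mpr hx
    simp [QuotientAddGroup.mk'_apply, hx0]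
  choose φ hφ0 hφne using hphi
  -- partial sums
  let P : (ℕ → Bool) → ℕ → (A →+ Circle1) := fun b n =>
    ∑ i ∈ Finset.range n, if b i then φ i else 0
  have hPapply : ∀ b n x, P b n x = ∑ i ∈ Finset.range n, (if b i then φ i (x) else 0) := by
    intro b n x
    rw [AddMonoidHom.finset_sum_apply]
    refine Finset.sum_congr rfl (fun i _ => ?_)
    by_cases hbi : b i <;> simp [hbi]
  have hPagree : ∀ (b : ℕ → Bool) (n n' : ℕ), n ≤ n' → ∀ x ∈ S n, P b n' x = P b n x := by
    intro b n n' hnn x hx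
    rw [hPapply, hPapply]
    refine (Finset.sum_subset (Finset.range_subset_range.mpr hnn) ?_).symm
    intro i hi hni
    have hin : n ≤ i := le_of_not_gt (fun h => hni (Finset.mem_range.mpr h))
    by_cases hbi : b i
    · simp [hbi, hφ0 i x (hSmono hin hx)]
    · simp [hbi]
  -- compactness argument
  haveI : Fact ((0 : ℝ) < 1) := ⟨zero_lt_one⟩
  have main : ∀ b : ℕ → Bool, ∃ f : A → Circle1,
      (∀ x y, f (x + y) = f x + f y) ∧ ∀ n, ∀ x ∈ S n, f x = P b n x := by
    intro b
    let C : ℕ → Set (A → Circle1) := fun n =>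
      {f | ∀ x y, f (x + y) = f x + f y} ∩ ⋂ x ∈ (S n : Set A), {f | f x = P b n x}
    have hCclosed : ∀ n, IsClosed (C n) := by
      intro n
      apply IsClosed.inter
      · have : {f : A → Circle1 | ∀ x y, f (x + y) = f x + f y} =
            ⋂ (x) (y), {f : A → Circle1 | f (x + y) = f x + f y} := by
          ext f; simp
        rw [this]
        exact isClosed_iInter fun x => isClosed_iInter fun y =>
          isClosed_eq (continuous_apply (x + y)) ((continuous_apply x).add (continuous_apply y))
      · exact isClosed_biInter fun x _ => isClosed_eq (continuous_apply _) continuous_const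
    have hCne : ∀ n, (C n).Nonempty := by
      intro n
      refine ⟨P b n, fun x y => map_add _ x y, ?_⟩
      simp only [Set.mem_iInter]
      intro x _
      rfl
    have hCdec : ∀ n, C (n + 1) ⊆ C n := by
      intro n f hf
      refine ⟨hf.1, ?_⟩
      simp only [Set.mem_iInter]
      intro x hx
      have hx' : x ∈ (S (n + 1) : Set A) := hSmono (Nat.le_succ n) hx
      have := Set.mem_iInter.mp (Set.mem_iInter.mp hf.2 x) hx'
      rw [Set.mem_setOf_eq] at this
      show f x = P b n x
      rw [this, hPagree b n (n + 1) (Nat.le_succ n) x hx]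
    obtain ⟨f, hf⟩ := IsCompact.nonempty_iInter_of_sequence_nonempty_isCompact_isClosed C
      hCdec hCne ((hCclosed 0).isCompact) hCclosed
    have hfmem : ∀ n, f ∈ C n := fun n => Set.mem_iInter.mp hf n
    refine ⟨f, (hfmem 0).1, fun n x hx => ?_⟩
    have := Set.mem_iInter.mp (Set.mem_iInter.mp (hfmem n).2 x) hx
    exact this
  choose f hfadd hfP using main
  let Φ : (ℕ → Bool) → (A →+ Circle1) := fun b => AddMonoidHom.mk' (f b) (fun x y => hfadd b x y)
  have hΦinj : Function.Injective Φ := by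
    intro b b' hbb
    by_contra hne
    have hex : ∃ n, b n ≠ b' n := Function.ne_iff.mp hne
    let n := Nat.find hex
    have hn : b n ≠ b' n := Nat.find_spec hex
    have hlt : ∀ i, i < n → b i = b' i := fun i hi => not_not.mp (Nat.find_min hex hi)
    have heval : f b (a n) = f b' (a n) := by
      have := DFunLike.congr_fun hbb (a n)
      simpa [Φ] using this
    have h1 : f b (a n) = P b (n + 1) (a n) := hfP b (n + 1) (a n) (haS n)
    have h2 : f b' (a n) = P b' (n + 1) (a n) := hfP b' (n + 1) (a n) (haS n)
    have hsum : P b (n + 1) (a n) = P b' (n + 1) (a n) := by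
      rw [← h1, ← h2, heval]
    rw [hPapply, hPapply, Finset.sum_range_succ, Finset.sum_range_succ] at hsum
    have hsame : ∑ i ∈ Finset.range n, (if b i then φ i (a n) else 0) =
        ∑ i ∈ Finset.range n, (if b' i then φ i (a n) else 0) :=
      Finset.sum_congr rfl (fun i hi => by rw [hlt i (Finset.mem_range.mp hi)])
    rw [hsame] at hsum
    have hfin := add_left_cancel hsum
    cases hb : b n <;> cases hb' : b' n
    · exact hn (hb.trans hb'.symm)
    · rw [hb, hb'] at hfin
      simp only [Bool.false_eq_true, if_false, if_true] at hfin
      exact hφne n hfin.symm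
    · rw [hb, hb'] at hfin
      simp only [Bool.false_eq_true, if_false, if_true] at hfin
      exact hφne n hfin
    · exact hn (hb.trans hb'.symm)
  have h1 : Cardinal.lift.{uA} (Cardinal.mk (ℕ → Bool)) ≤ Cardinal.mk (A →+ Circle1) := by
    have : Function.Injective (fun b : ULift.{uA} (ℕ → Bool) => Φ b.down) := by
      intro x y h
      exact ULift.ext _ _ (hΦinj h)
    simpa [Cardinal.mk_uLift] using Cardinal.mk_le_of_injective this
  have h2 : Cardinal.mk (ℕ → Bool) = Cardinal.continuum := by
    rw [Cardinal.mk_arrow]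
    simp [Cardinal.mk_bool, Cardinal.mk_nat, Cardinal.two_power_aleph0]
  rw [h2] at h1
  simpa using h1

end AuxProofs


theorem stmt7 {G : Type*} [AddCommGroup G] (τ : TopologicalSpace G)
    (htg : @IsTopologicalAddGroup G τ _) (hT2 : @T2Space G τ)
    (hb : BoundedGroup G) (hlqc : LocallyQuasiConvex τ)
    (hnp : ¬ Precompact τ) :
    Cardinal.continuum ≤ Cardinal.mk {φ : G →+ Circle1 // IsChar τ φ} := by
  classical
  letI : TopologicalSpace G := τ
  haveI : IsTopologicalAddGroup G := htg
  obtain ⟨m, hm, hmx⟩ := hb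
  rw [Precompact] at hnp
  push_neg at hnp
  obtain ⟨U, hU, hF⟩ := hnp
  obtain ⟨M, hM, hqc, hMU⟩ := hlqc U hU
  -- the subgroup of elements killed by all characters of the polar of `M`
  let H : AddSubgroup G :=
    { carrier := {x | ∀ ψ : G →+ Circle1, IsChar τ ψ → (∀ y ∈ M, ψ y ∈ Tpos) → ψ x = 0}
      zero_mem' := fun ψ _ _ => map_zero ψ
      add_mem' := by
        intro x y hx hy ψ h1 h2
        rw [map_add, hx ψ h1 h2, hy ψ h1 h2, add_zero]
      neg_mem' := by
        intro x hx ψ h1 h2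
        rw [map_neg, hx ψ h1 h2, neg_zero] }
  have hHM : (H : Set G) ⊆ M := by
    intro x hx
    by_contra hxM
    obtain ⟨ψ, hψc, hψM, hψx⟩ := hqc x hxM
    exact hψx (by rw [hx ψ hψc hψM]; exact tpos_zero)
  have hHnhds : (H : Set G) ∈ 𝓝 (0 : G) := by
    have hk : ∀ k : ℕ, {x : G | k • x ∈ M} ∈ 𝓝 (0 : G) := by
      intro k
      have hc : Continuous fun x : G => k • x := continuous_nsmul k
      have hM' : M ∈ 𝓝 ((fun x : G => k • x) 0) := by simpa using hM
      exact hc.continuousAt (x := (0 : G)) |>.preimage_mem_nhds hM'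
    have hN : (⋂ k ∈ Finset.range m, {x : G | k • x ∈ M}) ∈ 𝓝 (0 : G) :=
      (Filter.biInter_finset_mem _).mpr fun k _ => hk k
    refine Filter.mem_of_superset hN ?_
    intro x hx
    simp only [Set.mem_iInter] at hx
    intro ψ hψc hψM
    apply circle_eq_zero_of_forall_nsmul_mem
    intro k
    have hkx : k • x = (k % m) • x := by
      have h1 : k = m * (k / m) + k % m := (Nat.div_add_mod k m).symm
      conv_lhs => rw [h1]
      rw [add_nsmul, mul_nsmul, hmx, smul_zero, zero_add]
    have hmem : ψ (k • x) ∈ Tpos := by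
      rw [hkx]
      exact hψM _ (hx (k % m) (Finset.mem_range.mpr (Nat.mod_lt k hm)))
    rwa [map_nsmul] at hmem
  haveI hQinf : Infinite (G ⧸ H) := by
    rw [← not_finite_iff_infinite]
    intro hfin
    haveI := Fintype.ofFinite (G ⧸ H)
    obtain ⟨x, hx⟩ := hF ((Finset.univ : Finset (G ⧸ H)).image Quotient.out)
    refine hx ((x : G ⧸ H)).out (Finset.mem_image_of_mem _ (Finset.mem_univ _)) ?_
    apply hMU
    apply hHM
    have hout : (((((x : G ⧸ H)).out : G)) : G ⧸ H) = (x : G ⧸ H) :=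
      QuotientAddGroup.out_eq' _
    show x - ((x : G ⧸ H)).out ∈ H
    have : ((x - ((x : G ⧸ H)).out : G) : G ⧸ H) = 0 := by
      rw [QuotientAddGroup.mk_sub, hout, sub_self]
    exact (QuotientAddGroup.eq_zero_iff _).mp this
  have hmxQ : ∀ q : G ⧸ H, m • q = 0 := by
    intro q
    induction q using QuotientAddGroup.induction_on with
    | H x => rw [← QuotientAddGroup.mk_nsmul, hmx, QuotientAddGroup.mk_zero]
  have hcont : ∀ ψ : (G ⧸ H) →+ Circle1, IsChar τ (ψ.comp (QuotientAddGroup.mk' H)) := by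
    intro ψ
    rw [IsChar, continuous_iff_continuousAt]
    intro x₀
    have hnb : {y : G | y - x₀ ∈ H} ∈ 𝓝 x₀ := by
      have hcs : Continuous fun y : G => y - x₀ := continuous_id.sub continuous_const
      have hH' : (H : Set G) ∈ 𝓝 ((fun y : G => y - x₀) x₀) := by simpa using hHnhds
      exact hcs.continuousAt (x := x₀) |>.preimage_mem_nhds hH'
    apply ContinuousAt.congr (continuousAt_const (y := ψ ((QuotientAddGroup.mk' H) x₀)))
    refine Filter.eventuallyEq_of_mem hnb ?_
    intro y hy
    show ψ ((QuotientAddGroup.mk' H) x₀) = (ψ.comp (QuotientAddGroup.mk' H)) y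
    have : ((y - x₀ : G) : G ⧸ H) = 0 := (QuotientAddGroup.eq_zero_iff _).mpr hy
    rw [QuotientAddGroup.mk_sub, sub_eq_zero] at this
    simp only [AddMonoidHom.comp_apply, QuotientAddGroup.mk'_apply]
    rw [this]
  have hinj : Function.Injective (fun ψ : (G ⧸ H) →+ Circle1 =>
      (⟨ψ.comp (QuotientAddGroup.mk' H), hcont ψ⟩ : {φ : G →+ Circle1 // IsChar τ φ})) := by
    intro ψ ψ' h
    have h' : ψ.comp (QuotientAddGroup.mk' H) = ψ'.comp (QuotientAddGroup.mk' H) :=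
      congrArg Subtype.val h
    ext q
    exact DFunLike.congr_fun h' q
  calc Cardinal.continuum ≤ Cardinal.mk ((G ⧸ H) →+ Circle1) := card_continuum_le_hom hm hmxQ
    _ ≤ Cardinal.mk {φ : G →+ Circle1 // IsChar τ φ} := Cardinal.mk_le_of_injective hinj
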